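/- Let (ω, α) be a Jacobi sequence and let A, B, C be the annihilation, preservation and creation operators on finitely supported sequences indexed by ℕ. Then the following are equivalent: (i) the vectors (AC − CA)e_n/(ω n + ω(n−1)) and (AB − BA)e_n/(ω n + ω(n−1)) both tend to 0 in ℓ²-norm as n → ∞; (ii) lim_{n→∞} ω n / ω(n−1) = 1 and lim_{n→∞} (α n − α(n−1))/√(ω n + ω(n−1)) = 0. -/

import Mathlib

open Filter

/-- The annihilation operator: `A e_0 = 0`, `A e_n = √(ω (n-1))·e_{n-1}` for `n ≥ 1`. -/
noncomputable def annihilationOp (ω : ℕ → ℝ) : (ℕ →₀ ℝ) →ₗ[ℝ] (ℕ →₀ ℝ) :=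
  Finsupp.lsum ℝ fun n => LinearMap.toSpanSingleton ℝ (ℕ →₀ ℝ)
    (if n = 0 then 0 else Real.sqrt (ω (n - 1)) • Finsupp.single (n - 1) 1)

/-- The preservation operator: `B e_n = α n·e_n`. -/
noncomputable def preservationOp (α : ℕ → ℝ) : (ℕ →₀ ℝ) →ₗ[ℝ] (ℕ →₀ ℝ) :=
  Finsupp.lsum ℝ fun n => LinearMap.toSpanSingleton ℝ (ℕ →₀ ℝ) (α n • Finsupp.single n 1)

/-- The creation operator: `C e_n = √(ω n)·e_{n+1}`. -/
noncomputable def creationOp (ω : ℕ → ℝ) : (ℕ →₀ ℝ) →ₗ[ℝ] (ℕ →₀ ℝ) :=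
  Finsupp.lsum ℝ fun n => LinearMap.toSpanSingleton ℝ (ℕ →₀ ℝ)
    (Real.sqrt (ω n) • Finsupp.single (n + 1) 1)

/-- The ℓ²-norm of a finitely supported real sequence. -/
noncomputable def l2norm (f : ℕ →₀ ℝ) : ℝ :=
  Real.sqrt (∑ n ∈ f.support, (f n) ^ 2)

lemma l2norm_single (k : ℕ) (c : ℝ) : l2norm (Finsupp.single k c) = |c| := by
  rcases eq_or_ne c 0 with h | h
  · simp [l2norm, h]
  · rw [l2norm, Finsupp.support_single_ne_zero _ h]
    simp [Real.sqrt_sq_eq_abs]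

lemma comm1_apply (ω : ℕ → ℝ) (hω : ∀ n, 0 < ω n) (m : ℕ) :
    (annihilationOp ω ∘ₗ creationOp ω - creationOp ω ∘ₗ annihilationOp ω)
      (Finsupp.single (m+1) 1) = (ω (m+1) - ω m) • Finsupp.single (m+1) 1 := by
  simp [annihilationOp, creationOp, Finsupp.lsum_single, LinearMap.toSpanSingleton_apply,
    smul_smul, Real.mul_self_sqrt (hω _).le, sub_smul]

lemma comm2_apply (ω α : ℕ → ℝ) (m : ℕ) :
    (annihilationOp ω ∘ₗ preservationOp α - preservationOp α ∘ₗ annihilationOp ω)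
      (Finsupp.single (m+1) 1) = (Real.sqrt (ω m) * (α (m+1) - α m)) • Finsupp.single m 1 := by
  simp [annihilationOp, preservationOp, Finsupp.lsum_single, LinearMap.toSpanSingleton_apply,
    smul_smul, sub_smul]
  rw [mul_sub, mul_comm]

lemma sqrt_ratio_identity (a s δ : ℝ) (ha : 0 < a) (hsn : 0 < s) :
    δ / Real.sqrt s = (Real.sqrt a * δ / s) * Real.sqrt (s / a) := by
  have hsa : Real.sqrt a ≠ 0 := (Real.sqrt_pos.mpr ha).ne'
  have hss : Real.sqrt s ≠ 0 := (Real.sqrt_pos.mpr hsn).ne'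
  rw [Real.sqrt_div hsn.le]
  field_simp
  ring_nf
  linear_combination (-δ) * (Real.sq_sqrt hsn.le)

/-- The relative asymptotic commutativity condition (RAC1) is equivalent to
`ω n / ω (n-1) → 1` and `(α n − α (n-1)) / √(ω n + ω (n-1)) → 0`. -/
theorem RAC1_equiv_ratio_conditions (ω α : ℕ → ℝ) (hω : ∀ n, 0 < ω n) :
    (Tendsto (fun n : ℕ =>
        l2norm ((1 / (ω n + ω (n - 1))) •
          ((annihilationOp ω ∘ₗ creationOp ω - creationOp ω ∘ₗ annihilationOp ω)
            (Finsupp.single n 1)))) atTop (nhds 0) ∧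
     Tendsto (fun n : ℕ =>
        l2norm ((1 / (ω n + ω (n - 1))) •
          ((annihilationOp ω ∘ₗ preservationOp α - preservationOp α ∘ₗ annihilationOp ω)
            (Finsupp.single n 1)))) atTop (nhds 0))
    ↔
    (Tendsto (fun n : ℕ => ω n / ω (n - 1)) atTop (nhds 1) ∧
     Tendsto (fun n : ℕ => (α n - α (n - 1)) / Real.sqrt (ω n + ω (n - 1))) atTop (nhds 0)) := by
  have hs : ∀ n : ℕ, 0 < ω n + ω (n - 1) := fun n => add_pos (hω n) (hω _)
  set u : ℕ → ℝ := fun n => (ω n - ω (n - 1)) / (ω n + ω (n - 1)) with hu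
  set v : ℕ → ℝ := fun n =>
    Real.sqrt (ω (n - 1)) * (α n - α (n - 1)) / (ω n + ω (n - 1)) with hv
  set r : ℕ → ℝ := fun n => ω n / ω (n - 1) with hr
  set g : ℕ → ℝ := fun n => (α n - α (n - 1)) / Real.sqrt (ω n + ω (n - 1)) with hg
  have e1 : (fun n : ℕ =>
      l2norm ((1 / (ω n + ω (n - 1))) •
        ((annihilationOp ω ∘ₗ creationOp ω - creationOp ω ∘ₗ annihilationOp ω)
          (Finsupp.single n 1)))) =ᶠ[atTop] fun n => |u n| := by
    filter_upwards [eventually_ge_atTop 1] with n hn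
    obtain ⟨m, rfl⟩ := Nat.exists_eq_succ_of_ne_zero (Nat.one_le_iff_ne_zero.mp hn)
    rw [comm1_apply ω hω, smul_smul, Finsupp.smul_single, smul_eq_mul, mul_one, l2norm_single]
    simp only [hu, Nat.add_sub_cancel, Nat.succ_sub_one, Nat.succ_eq_add_one]
    rw [mul_comm, mul_one_div]
  have e2 : (fun n : ℕ =>
      l2norm ((1 / (ω n + ω (n - 1))) •
        ((annihilationOp ω ∘ₗ preservationOp α - preservationOp α ∘ₗ annihilationOp ω)
          (Finsupp.single n 1)))) =ᶠ[atTop] fun n => |v n| := by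
    filter_upwards [eventually_ge_atTop 1] with n hn
    obtain ⟨m, rfl⟩ := Nat.exists_eq_succ_of_ne_zero (Nat.one_le_iff_ne_zero.mp hn)
    rw [comm2_apply ω α, smul_smul, Finsupp.smul_single, smul_eq_mul, mul_one, l2norm_single]
    simp only [hv, Nat.add_sub_cancel, Nat.succ_sub_one, Nat.succ_eq_add_one]
    rw [mul_comm, mul_one_div]
  have hid1 : ∀ n, r n = (1 + u n) / (1 - u n) := by
    intro n
    have ha := (hω (n - 1)).ne'
    have hsn := (hs n).ne'
    have h1 : 1 - u n = 2 * ω (n - 1) / (ω n + ω (n - 1)) := by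
      simp only [hu]; field_simp; ring
    have h2 : 1 + u n = 2 * ω n / (ω n + ω (n - 1)) := by
      simp only [hu]; field_simp; ring
    rw [hr, h1, h2, div_div_div_comm, div_self hsn, div_one,
      mul_div_mul_left _ _ (two_ne_zero)]
  have hid2 : ∀ n, u n = (r n - 1) / (r n + 1) := by
    intro n
    have ha := (hω (n - 1)).ne'
    simp only [hu, hr]
    rw [div_sub_one ha, div_add_one ha, div_div_div_comm, div_self ha, div_one]
  have hid3 : ∀ n, g n = v n * Real.sqrt (r n + 1) := by
    intro n
    have ha := (hω (n - 1)).ne'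
    simp only [hg, hv, hr]
    rw [div_add_one ha]
    exact sqrt_ratio_identity _ _ _ (hω _) (hs n)
  have hsqrt2 : (Real.sqrt 2 : ℝ) ≠ 0 := by positivity
  constructor
  · rintro ⟨H1, H2⟩
    rw [tendsto_congr' e1] at H1
    rw [tendsto_congr' e2] at H2
    have hu0 : Tendsto u atTop (nhds 0) := (tendsto_zero_iff_abs_tendsto_zero u).mpr H1
    have hv0 : Tendsto v atTop (nhds 0) := (tendsto_zero_iff_abs_tendsto_zero v).mpr H2
    have hr1 : Tendsto r atTop (nhds 1) := by
      have : Tendsto (fun n => (1 + u n) / (1 - u n)) atTop (nhds ((1 + 0) / (1 - 0))) :=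
        (tendsto_const_nhds.add hu0).div (tendsto_const_nhds.sub hu0) (by norm_num)
      simp only [add_zero, sub_zero, div_one] at this
      exact (tendsto_congr hid1).mpr this
    refine ⟨hr1, ?_⟩
    have hsq : Tendsto (fun n => Real.sqrt (r n + 1)) atTop (nhds (Real.sqrt (1 + 1))) :=
      (hr1.add tendsto_const_nhds).sqrt
    have := hv0.mul hsq
    rw [zero_mul] at this
    exact (tendsto_congr hid3).mpr this
  · rintro ⟨hr1, hg0⟩
    have hu0 : Tendsto u atTop (nhds 0) := by
      have : Tendsto (fun n => (r n - 1) / (r n + 1)) atTop (nhds ((1 - 1) / (1 + 1))) :=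
        (hr1.sub tendsto_const_nhds).div (hr1.add tendsto_const_nhds) (by norm_num)
      simp only [sub_self, zero_div] at this
      exact (tendsto_congr hid2).mpr this
    have hsq : Tendsto (fun n => Real.sqrt (r n + 1)) atTop (nhds (Real.sqrt (1 + 1))) :=
      (hr1.add tendsto_const_nhds).sqrt
    have hv0 : Tendsto v atTop (nhds 0) := by
      have hvg : ∀ n, v n = g n / Real.sqrt (r n + 1) := by
        intro n
        have hpos : Real.sqrt (r n + 1) ≠ 0 := by
          have : (0:ℝ) < r n + 1 := by
            have : 0 < r n := div_pos (hω n) (hω _)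
            linarith
          exact (Real.sqrt_pos.mpr this).ne'
        rw [hid3 n, mul_div_assoc, div_self hpos, mul_one]
      have : Tendsto (fun n => g n / Real.sqrt (r n + 1)) atTop
          (nhds (0 / Real.sqrt (1 + 1))) :=
        hg0.div hsq (by norm_num [Real.sqrt_eq_zero'])
      rw [zero_div] at this
      exact (tendsto_congr hvg).mpr this
    rw [tendsto_congr' e1, tendsto_congr' e2]
    exact ⟨(tendsto_zero_iff_abs_tendsto_zero u).mp hu0,
      (tendsto_zero_iff_abs_tendsto_zero v).mp hv0⟩
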